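/- arXiv:2401.12969 — 6 statements merged into one kernel-verified Lean document; each statement's English description precedes it below -/
import Mathlib

section
/- A finite matroid is determined by its rank and its collection of non-spanning circuits: if M and N are finite matroids on the same ground set with the same rank and the same collection of non-spanning circuits, then M = N. -/
open Set

namespace Matroid

variable {α β : Type*}

/-- A circuit of a matroid is a minimal dependent set. -/
def Circuit (M : Matroid α) (C : Set α) : Prop :=
  M.Dep C ∧ ∀ ⦃D : Set α⦄, M.Dep D → D ⊆ C → D = C

/-- The rank of a set `X` in a matroid `M` : the maximum cardinality of an
independent subset of `X`. -/
noncomputable def rkOn (M : Matroid α) (X : Set α) : ℕ :=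
  sSup {n | ∃ I, M.Indep I ∧ I ⊆ X ∧ I.ncard = n}

/-- The rank of a matroid : the rank of its ground set. -/
noncomputable def rank (M : Matroid α) : ℕ := M.rkOn M.E

/-- A hyperplane : a flat whose rank is one less than the rank of the matroid. -/
def Hyperplane (M : Matroid α) (H : Set α) : Prop :=
  M.IsFlat H ∧ M.rkOn H + 1 = M.rank

/-- Deletion of the set `D` from the matroid `M`. -/
def delete' (M : Matroid α) (D : Set α) : Matroid α := M.restrict (M.E \ D)

/-- Contraction of the set `C` in the matroid `M`. -/
def contract' (M : Matroid α) (C : Set α) : Matroid α := ((M✶).delete' C)✶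

/-- A circuit `C` of `M` is freely placed if every circuit `C'` of `M` with `C' ≠ C`
and `C' ∩ C ≠ ∅` is spanning. -/
def FreelyPlaced (M : Matroid α) (C : Set α) : Prop :=
  ∀ ⦃C' : Set α⦄, M.Circuit C' → C' ≠ C → (C' ∩ C).Nonempty → M.Spanning C'

/-- A coloop is an element belonging to every base. -/
def Coloop (M : Matroid α) (e : α) : Prop := ∀ ⦃B : Set α⦄, M.IsBase B → e ∈ B

/-- An element `e` is free in `M` if it is not a coloop and every circuit
containing `e` is spanning. -/
def FreeElem (M : Matroid α) (e : α) : Prop :=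
  e ∈ M.E ∧ ¬ M.Coloop e ∧ ∀ ⦃C : Set α⦄, M.Circuit C → e ∈ C → M.Spanning C

/-- A loop is an element `e` such that `{e}` is a circuit. -/
def IsLoop' (M : Matroid α) (e : α) : Prop := M.Circuit {e}

/-- Two non-loop elements of the ground set are parallel if they are equal or
form a two-element circuit. -/
def Parallel (M : Matroid α) (e f : α) : Prop :=
  e ∈ M.E ∧ f ∈ M.E ∧ ¬ M.IsLoop' e ∧ ¬ M.IsLoop' f ∧ (e = f ∨ M.Circuit {e, f})

/-- Two matroids are isomorphic if there is a bijection between their ground sets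
mapping independent sets to independent sets. -/
def IsIso (M : Matroid α) (N : Matroid β) : Prop :=
  ∃ e : M.E ≃ N.E, ∀ I : Set M.E,
    M.Indep (Subtype.val '' I) ↔ N.Indep (Subtype.val '' (e '' I))


lemma aux_exists_circuit (M : Matroid α) [M.Finite] {D : Set α} (hD : M.Dep D) :
    ∃ C, C ⊆ D ∧ M.Circuit C := by
  set S : Set ℕ := {n | ∃ C, C ⊆ D ∧ M.Dep C ∧ C.ncard = n} with hS
  have hne : S.Nonempty := ⟨D.ncard, D, Subset.rfl, hD, rfl⟩
  obtain ⟨C, hCD, hCdep, hCcard⟩ := Nat.sInf_mem hne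
  refine ⟨C, hCD, hCdep, fun D' hD' hsub ↦ ?_⟩
  have hle : sInf S ≤ D'.ncard := Nat.sInf_le ⟨D', hsub.trans hCD, hD', rfl⟩
  exact Set.eq_of_subset_of_ncard_le hsub (by omega)
    (M.set_finite C hCdep.subset_ground)

lemma aux_ncard_le_rank (M : Matroid α) [M.Finite] {I : Set α} (hI : M.Indep I) :
    I.ncard ≤ M.rank := by
  obtain ⟨B, hB⟩ := M.exists_isBase
  have hub : ∀ n ∈ {n | ∃ I, M.Indep I ∧ I ⊆ M.E ∧ I.ncard = n}, n ≤ B.ncard := by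
    rintro n ⟨J, hJ, -, rfl⟩
    obtain ⟨B', hB', hJB'⟩ := hJ.exists_isBase_superset
    rw [← hB'.ncard_eq_ncard_of_isBase hB]
    exact Set.ncard_le_ncard hJB' (M.set_finite B' hB'.subset_ground)
  exact le_csSup ⟨B.ncard, hub⟩ ⟨I, hI, hI.subset_ground, rfl⟩

lemma aux_base_ncard (M : Matroid α) [M.Finite] {B : Set α} (hB : M.IsBase B) :
    M.rank = B.ncard := by
  refine le_antisymm ?_ (aux_ncard_le_rank M hB.indep)
  refine csSup_le ⟨B.ncard, B, hB.indep, hB.subset_ground, rfl⟩ ?_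
  rintro n ⟨J, hJ, -, rfl⟩
  obtain ⟨B', hB', hJB'⟩ := hJ.exists_isBase_superset
  rw [← hB'.ncard_eq_ncard_of_isBase hB]
  exact Set.ncard_le_ncard hJB' (M.set_finite B' hB'.subset_ground)

lemma aux_indep_iff (M : Matroid α) [M.Finite] {I : Set α} :
    M.Indep I ↔ I ⊆ M.E ∧ I.ncard ≤ M.rank ∧
      ∀ C, C ⊆ I → ¬ (M.Circuit C ∧ ¬ M.Spanning C) := by
  constructor
  · intro hI
    exact ⟨hI.subset_ground, aux_ncard_le_rank M hI,
      fun C hCI ⟨hCc, _⟩ ↦ hCc.1.not_indep (hI.subset hCI)⟩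
  rintro ⟨hIE, hcard, hns⟩
  by_contra hdep
  obtain ⟨C, hCI, hCc⟩ := aux_exists_circuit M ⟨hdep, hIE⟩
  have hCE : C ⊆ M.E := hCc.1.subset_ground
  have hsp : M.Spanning C := by
    by_contra h; exact hns C hCI ⟨hCc, h⟩
  obtain ⟨e, he⟩ := hCc.1.nonempty
  have heE : e ∈ M.E := hCE he
  have hCe : M.Indep (C \ {e}) := by
    by_contra h
    have : C \ {e} = C := hCc.2 ⟨h, diff_subset.trans hCE⟩ diff_subset
    simp only [Set.ext_iff, Set.mem_diff, Set.mem_singleton_iff] at this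
    exact ((this e).2 he).2 rfl
  have hecl : e ∈ M.closure (C \ {e}) := by
    by_contra h
    have : M.Indep (insert e (C \ {e})) :=
      (hCe.insert_indep_iff_of_notMem (by simp)).2 ⟨heE, h⟩
    rw [Set.insert_diff_singleton, Set.insert_eq_of_mem he] at this
    exact hCc.1.not_indep this
  have hspB : M.Spanning (C \ {e}) := by
    have hCsub : C ⊆ M.closure (C \ {e}) := by
      intro x hx
      rcases eq_or_ne x e with rfl | hne
      · exact hecl
      · exact M.subset_closure (C \ {e}) (diff_subset.trans hCE) ⟨hx, hne⟩
    refine ⟨subset_antisymm (M.closure_subset_ground _) ?_, diff_subset.trans hCE⟩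
    have h2 : M.closure C ⊆ M.closure (M.closure (C \ {e})) :=
      M.closure_subset_closure hCsub
    rw [M.closure_closure] at h2
    exact hsp.closure_eq ▸ h2
  have hbase : M.IsBase (C \ {e}) := hCe.isBase_of_spanning hspB
  have hCfin : C.Finite := M.set_finite C hCE
  have hcardC : C.ncard = M.rank + 1 := by
    rw [aux_base_ncard M hbase]
    rw [Set.ncard_diff_singleton_add_one he hCfin]
  have : C.ncard ≤ I.ncard := Set.ncard_le_ncard hCI (M.set_finite I hIE)
  omega

/-- A finite matroid is determined by its rank and its collection of
non-spanning circuits. -/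
theorem eq_of_rank_eq_of_nonspanning_circuits_eq (M N : Matroid α) [M.Finite] [N.Finite]
    (hE : M.E = N.E) (hr : M.rank = N.rank)
    (hC : ∀ C : Set α, (M.Circuit C ∧ ¬ M.Spanning C) ↔ (N.Circuit C ∧ ¬ N.Spanning C)) :
    M = N := by
  refine ext_indep hE fun I hI ↦ ?_
  rw [aux_indep_iff, aux_indep_iff, hE, hr]
  refine and_congr_right fun _ ↦ and_congr_right fun _ ↦ ?_
  exact forall_congr' fun C ↦ imp_congr_right fun _ ↦ not_congr (hC C)

end Matroid
end

section
/- Let M be a finite matroid of rank n ≥ 2 whose ground set is partitioned into disjoint sets A and B that are both circuit-hyperplanes of M, and such that every non-spanning circuit of M is equal to A or to B. Then M is equal to its own dual: M✶ = M. (That is, the matroid P_n is self-dual.) -/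
open Set

namespace Matroid

variable {α β : Type*}

theorem aux_circuit_diff_indep {M : Matroid α} {C : Set α} (hC : M.Circuit C) {e : α}
    (he : e ∈ C) : M.Indep (C \ {e}) := by
  by_contra h
  have hdep : M.Dep (C \ {e}) := ⟨h, (diff_subset).trans hC.1.subset_ground⟩
  have := hC.2 hdep diff_subset
  exact (this ▸ (fun (h : e ∈ C \ {e}) ↦ h.2 rfl)) (this ▸ he)

theorem aux_circuit_nonempty {M : Matroid α} {C : Set α} (hC : M.Circuit C) : C.Nonempty := by
  rcases C.eq_empty_or_nonempty with h | h
  · exact absurd (h ▸ M.empty_indep) hC.1.not_indep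
  · exact h

theorem aux_circuit_rkOn {M : Matroid α} [M.Finite] {C : Set α} (hC : M.Circuit C) :
    M.rkOn C + 1 = C.ncard := by
  have hfin : C.Finite := M.set_finite C hC.1.subset_ground
  obtain ⟨e, he⟩ := aux_circuit_nonempty hC
  have hpos : 1 ≤ C.ncard := (Set.ncard_pos hfin).mpr ⟨e, he⟩
  have hmem : C.ncard - 1 ∈ {n | ∃ I, M.Indep I ∧ I ⊆ C ∧ I.ncard = n} :=
    ⟨C \ {e}, aux_circuit_diff_indep hC he, diff_subset, Set.ncard_diff_singleton_of_mem he⟩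
  have hbd : ∀ m ∈ {n | ∃ I, M.Indep I ∧ I ⊆ C ∧ I.ncard = n}, m ≤ C.ncard - 1 := by
    rintro m ⟨I, hI, hIC, rfl⟩
    have hne : I ≠ C := fun h ↦ hC.1.not_indep (h ▸ hI)
    have := Set.ncard_lt_ncard (hIC.ssubset_of_ne hne) hfin
    omega
  have h1 : M.rkOn C = C.ncard - 1 :=
    le_antisymm (csSup_le ⟨_, hmem⟩ hbd) (le_csSup ⟨C.ncard - 1, hbd⟩ hmem)
  rw [rkOn] at h1 ⊢
  omega

theorem aux_rank_eq_ncard_base {M : Matroid α} [M.Finite] {B₀ : Set α} (hB₀ : M.IsBase B₀) :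
    M.rank = B₀.ncard := by
  have hmem : B₀.ncard ∈ {n | ∃ I, M.Indep I ∧ I ⊆ M.E ∧ I.ncard = n} :=
    ⟨B₀, hB₀.indep, hB₀.subset_ground, rfl⟩
  have hbd : ∀ m ∈ {n | ∃ I, M.Indep I ∧ I ⊆ M.E ∧ I.ncard = n}, m ≤ B₀.ncard := by
    rintro m ⟨I, hI, hIE, rfl⟩
    obtain ⟨B', hB', hIB'⟩ := hI.exists_isBase_superset
    calc I.ncard ≤ B'.ncard := Set.ncard_le_ncard hIB' (M.set_finite B' hB'.subset_ground)
    _ = B₀.ncard := hB'.ncard_eq_ncard_of_isBase hB₀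
  exact le_antisymm (csSup_le ⟨_, hmem⟩ hbd) (le_csSup ⟨B₀.ncard, hbd⟩ hmem)

theorem aux_exists_circuit_subset (M : Matroid α) [M.Finite] :
    ∀ (k : ℕ) (X : Set α), X.ncard = k → M.Dep X → ∃ C, M.Circuit C ∧ C ⊆ X := by
  intro k
  induction k using Nat.strong_induction_on with
  | _ k ih =>
    intro X hk hX
    by_cases h : ∀ ⦃D : Set α⦄, M.Dep D → D ⊆ X → D = X
    · exact ⟨X, ⟨hX, h⟩, Subset.rfl⟩
    · push_neg at h
      obtain ⟨D, hD, hDX, hne⟩ := h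
      have hfin : X.Finite := M.set_finite X hX.subset_ground
      have hlt : D.ncard < k := hk ▸ Set.ncard_lt_ncard (hDX.ssubset_of_ne hne) hfin
      obtain ⟨C, hC, hCD⟩ := ih _ hlt D rfl hD
      exact ⟨C, hC, hCD.trans hDX⟩

/-- The matroid `P_n` is self-dual : a finite matroid of rank `n ≥ 2` whose ground set
is partitioned into two circuit-hyperplanes, such that every non-spanning circuit is
one of them, equals its own dual. -/
theorem pn_self_dual (M : Matroid α) [M.Finite] (n : ℕ) (hn : 2 ≤ n) (hr : M.rank = n)
    (A B : Set α) (hAB : Disjoint A B) (hU : A ∪ B = M.E)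
    (hA : M.Circuit A ∧ M.Hyperplane A) (hB : M.Circuit B ∧ M.Hyperplane B)
    (hns : ∀ C : Set α, M.Circuit C → ¬ M.Spanning C → C = A ∨ C = B) :
    M✶ = M := by
  have hEfin : M.E.Finite := M.ground_finite
  have hAfin : A.Finite := hEfin.subset (hU ▸ subset_union_left)
  have hBfin : B.Finite := hEfin.subset (hU ▸ subset_union_right)
  have hAn : A.ncard = n := by
    have h1 := aux_circuit_rkOn hA.1
    have h2 := hA.2.2
    omega
  have hBn : B.ncard = n := by
    have h1 := aux_circuit_rkOn hB.1
    have h2 := hB.2.2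
    omega
  have hEcard : M.E.ncard = 2 * n := by
    rw [← hU, Set.ncard_union_eq hAB hAfin hBfin]
    omega
  have hbase_card : ∀ X, M.IsBase X → X.ncard = n := fun X hX ↦ by
    rw [← hr, aux_rank_eq_ncard_base hX]
  have hbase_iff : ∀ X, M.IsBase X ↔ X ⊆ M.E ∧ X.ncard = n ∧ X ≠ A ∧ X ≠ B := by
    intro X
    constructor
    · intro hX
      refine ⟨hX.subset_ground, hbase_card X hX, ?_, ?_⟩
      · rintro rfl; exact hA.1.1.not_indep hX.indep
      · rintro rfl; exact hB.1.1.not_indep hX.indep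
    · rintro ⟨hXE, hXn, hXA, hXB⟩
      have hXfin : X.Finite := hEfin.subset hXE
      have hXi : M.Indep X := by
        by_contra h
        obtain ⟨C, hC, hCX⟩ := aux_exists_circuit_subset M X.ncard X rfl ⟨h, hXE⟩
        by_cases hsp : M.Spanning C
        · obtain ⟨B0, hB0, hB0C⟩ := hsp.exists_isBase_subset
          have hne : B0 ≠ C := fun he ↦ hC.1.not_indep (he ▸ hB0.indep)
          have h1 := Set.ncard_lt_ncard (hB0C.ssubset_of_ne hne)
            (hEfin.subset hC.1.subset_ground)
          have h2 := Set.ncard_le_ncard hCX hXfin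
          have h3 := hbase_card B0 hB0
          omega
        · rcases hns C hC hsp with rfl | rfl
          · exact hXA (Set.eq_of_subset_of_ncard_le hCX (by omega) hXfin).symm
          · exact hXB (Set.eq_of_subset_of_ncard_le hCX (by omega) hXfin).symm
      obtain ⟨B', hB', hXB'⟩ := hXi.exists_isBase_superset
      have hXeq : X = B' := Set.eq_of_subset_of_ncard_le hXB'
        (by rw [hbase_card B' hB']; omega) (hEfin.subset hB'.subset_ground)
      exact hXeq ▸ hB'
  have hEA : M.E \ A = B := by
    rw [← hU]
    exact Set.union_diff_cancel_left (Set.disjoint_iff.mp hAB)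
  have hEB : M.E \ B = A := by
    rw [← hU, union_comm]
    exact Set.union_diff_cancel_left (Set.disjoint_iff.mp hAB.symm)
  refine ext_isBase (M.dual_ground) ?_
  intro X hXE
  have hXE' : X ⊆ M.E := by simpa using hXE
  have hXfin : X.Finite := hEfin.subset hXE'
  have hcdiff : (M.E \ X).ncard = M.E.ncard - X.ncard := Set.ncard_diff hXE' hXfin
  have hcle : X.ncard ≤ M.E.ncard := Set.ncard_le_ncard hXE' hEfin
  rw [dual_isBase_iff', hbase_iff, hbase_iff]
  constructor
  · rintro ⟨⟨-, hc, hnA, hnB⟩, -⟩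
    refine ⟨hXE', by omega, ?_, ?_⟩
    · rintro rfl; exact hnB hEA
    · rintro rfl; exact hnA hEB
  · rintro ⟨-, hc, hnA, hnB⟩
    refine ⟨⟨diff_subset, by omega, ?_, ?_⟩, hXE'⟩
    · intro h
      have hX : X = M.E \ A := by rw [← h, Set.diff_diff_cancel_left hXE']
      exact hnB (hX.trans hEA)
    · intro h
      have hX : X = M.E \ B := by rw [← h, Set.diff_diff_cancel_left hXE']
      exact hnA (hX.trans hEB)


end Matroid
end

section
/- Let n ≥ k ≥ 2 be integers and let M be a finite matroid whose ground set E is partitioned into pairwise disjoint sets E₁, E₂, E₃ with |E₁| = |E₂| = n and |E₃| = k, such that the independent sets of M are exactly the subsets I of E with |I| ≤ n, I ≠ E₁, I ≠ E₂ and E₃ ⊄ I (so M is a copy of B_{n,k} = T_n(U_{n−1,n} ⊕ U_{n−1,n} ⊕ U_{k−1,k})). Then E₃ is a non-spanning circuit of M that is freely placed and coindependent, and the deletion M \ E₃ has independent sets exactly the subsets I of E₁ ∪ E₂ with |I| ≤ n, I ≠ E₁ and I ≠ E₂ (so M \ E₃ is a copy of P_n). -/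
open Set

namespace Matroid

variable {α β : Type*}

lemma aux_ncard_le_one_of_subsingleton {s : Set α} (h : s.Subsingleton) : s.ncard ≤ 1 := by
  rcases h.eq_empty_or_singleton with rfl | ⟨x, rfl⟩ <;> simp

/-- In a copy of `B_{n,k}`, the set `E₃` is a freely placed, coindependent,
non-spanning circuit, and deleting it yields a copy of `P_n`. -/
theorem bnk_delete_e3 (M : Matroid α) [M.Finite] (n k : ℕ) (hk : 2 ≤ k) (hnk : k ≤ n)
    (E₁ E₂ E₃ : Set α) (h12 : Disjoint E₁ E₂) (h13 : Disjoint E₁ E₃) (h23 : Disjoint E₂ E₃)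
    (hU : E₁ ∪ E₂ ∪ E₃ = M.E) (h1 : E₁.ncard = n) (h2 : E₂.ncard = n) (h3 : E₃.ncard = k)
    (hI : ∀ I : Set α, M.Indep I ↔ (I ⊆ M.E ∧ I.ncard ≤ n ∧ I ≠ E₁ ∧ I ≠ E₂ ∧ ¬ E₃ ⊆ I)) :
    (M.Circuit E₃ ∧ ¬ M.Spanning E₃) ∧ M.FreelyPlaced E₃ ∧ M.Coindep E₃ ∧
      ∀ I : Set α, (M.delete' E₃).Indep I ↔
        (I ⊆ E₁ ∪ E₂ ∧ I.ncard ≤ n ∧ I ≠ E₁ ∧ I ≠ E₂) := by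
  have hEfin : M.E.Finite := M.ground_finite
  have h1E : E₁ ⊆ M.E := hU ▸ (subset_union_left.trans subset_union_left)
  have h2E : E₂ ⊆ M.E := hU ▸ (subset_union_right.trans subset_union_left)
  have h3E : E₃ ⊆ M.E := hU ▸ subset_union_right
  have hf1 : E₁.Finite := hEfin.subset h1E
  have hf2 : E₂.Finite := hEfin.subset h2E
  have hf3 : E₃.Finite := hEfin.subset h3E
  have hne1 : E₁.Nonempty := nonempty_of_ncard_ne_zero (by omega)
  have hne2 : E₂.Nonempty := nonempty_of_ncard_ne_zero (by omega)
  have hne3 : E₃.Nonempty := nonempty_of_ncard_ne_zero (by omega)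
  have hEcard : M.E.ncard = 2 * n + k := by
    rw [← hU, ncard_union_eq (by simp [disjoint_union_left, h13, h23]) (hf1.union hf2) hf3,
      ncard_union_eq h12 hf1 hf2, h1, h2, h3]; ring
  -- extension lemma
  have hext : ∀ I : Set α, M.Indep I → I.ncard < n →
      ∃ x, x ∉ I ∧ x ∈ M.E ∧ M.Indep (insert x I) := by
    intro I hInd hcard
    obtain ⟨hIE, -, hIne1, hIne2, hI3⟩ := (hI I).1 hInd
    have hIfin : I.Finite := hEfin.subset hIE
    have key : ∀ E' : Set α, I ≠ E' → {x | insert x I = E'}.Subsingleton := by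
      intro E' hne a ha b hb
      simp only [mem_setOf_eq] at ha hb
      rcases em (a ∈ I) with haI | haI
      · exact absurd (by rwa [insert_eq_of_mem haI] at ha) hne
      rcases em (b ∈ I) with hbI | hbI
      · exact absurd (by rwa [insert_eq_of_mem hbI] at hb) hne
      have : a ∈ insert b I := by rw [hb, ← ha]; exact mem_insert _ _
      exact this.elim id (fun h' => absurd h' haI)
    obtain ⟨z, hz3, hzI⟩ := not_subset.1 hI3
    have key3 : {x | E₃ ⊆ insert x I}.Subsingleton := by
      intro a ha b hb
      simp only [mem_setOf_eq] at ha hb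
      have hza := (ha hz3).elim id (fun h => absurd h hzI)
      have hzb := (hb hz3).elim id (fun h => absurd h hzI)
      rw [← hza, ← hzb]
    set S : Set α := I ∪ ({x | insert x I = E₁} ∪ {x | insert x I = E₂} ∪ {x | E₃ ⊆ insert x I})
      with hS
    have hSfin : S.Finite :=
      hIfin.union (((key E₁ hIne1).finite.union (key E₂ hIne2).finite).union key3.finite)
    have hScard : S.ncard ≤ I.ncard + 3 := by
      calc S.ncard ≤ I.ncard +
            ({x | insert x I = E₁} ∪ {x | insert x I = E₂} ∪ {x | E₃ ⊆ insert x I}).ncard :=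
              ncard_union_le _ _
        _ ≤ I.ncard + 3 := by
            have := ncard_union_le ({x | insert x I = E₁} ∪ {x | insert x I = E₂})
              {x | E₃ ⊆ insert x I}
            have := ncard_union_le {x | insert x I = E₁} {x | insert x I = E₂}
            have := aux_ncard_le_one_of_subsingleton (key E₁ hIne1)
            have := aux_ncard_le_one_of_subsingleton (key E₂ hIne2)
            have := aux_ncard_le_one_of_subsingleton key3
            omega
    have hEx : (M.E \ S).Nonempty := by
      rw [diff_nonempty]
      intro hsub
      have := ncard_le_ncard hsub hSfin
      omega
    obtain ⟨x, hxE, hxS⟩ := hEx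
    simp only [hS, mem_union, mem_setOf_eq, not_or] at hxS
    obtain ⟨hxI, ⟨hx1, hx2⟩, hx3⟩ := hxS
    refine ⟨x, hxI, hxE, (hI _).2 ⟨insert_subset hxE hIE, ?_, hx1, hx2, hx3⟩⟩
    rw [ncard_insert_of_notMem hxI hIfin]; omega
  have hbase : ∀ B : Set α, M.Indep B → B.ncard = n → M.IsBase B := by
    intro B hB hcard
    refine hB.isBase_of_maximal fun J hJ hBJ => ?_
    have hJE := ((hI J).1 hJ).1
    exact eq_of_subset_of_ncard_le hBJ (by have := ((hI J).1 hJ).2.1; omega) (hEfin.subset hJE)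
  have hbasecard : ∀ B : Set α, M.IsBase B → B.ncard = n := by
    intro B hB
    have hBi := hB.indep
    have hle := ((hI B).1 hBi).2.1
    by_contra hne
    obtain ⟨x, hxB, hxE, hxi⟩ := hext B hBi (by omega)
    have h' := hB.eq_of_subset_indep hxi (subset_insert _ _)
    exact hxB (h' ▸ mem_insert _ _)
  have hE₃dep : M.Dep E₃ := by
    rw [dep_iff]
    exact ⟨fun h => ((hI E₃).1 h).2.2.2.2 Subset.rfl, h3E⟩
  have hcirc : M.Circuit E₃ := by
    refine ⟨hE₃dep, fun D hD hDE₃ => ?_⟩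
    by_contra hne
    refine hD.1 ((hI D).2 ⟨hD.2, le_trans (ncard_le_ncard hDE₃ hf3) (by omega), ?_, ?_, ?_⟩)
    · rintro rfl
      obtain ⟨a, ha⟩ := hne1
      exact disjoint_left.1 h13 ha (hDE₃ ha)
    · rintro rfl
      obtain ⟨a, ha⟩ := hne2
      exact disjoint_left.1 h23 ha (hDE₃ ha)
    · exact fun h => hne (hDE₃.antisymm h)
  have hnspan : ¬ M.Spanning E₃ := by
    intro h
    obtain ⟨B, hB, hBE₃⟩ := (spanning_iff_exists_isBase_subset h3E).1 h
    have hBcard := hbasecard B hB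
    have hk' : n ≤ k := by have := ncard_le_ncard hBE₃ hf3; omega
    have hBeq : B = E₃ := eq_of_subset_of_ncard_le hBE₃ (by omega) hf3
    exact hE₃dep.1 (hBeq ▸ hB.indep)
  have hfree : M.FreelyPlaced E₃ := by
    intro C' hC' hCne hCint
    obtain ⟨hC'dep, hC'min⟩ := hC'
    have hC'E : C' ⊆ M.E := hC'dep.2
    have hC'fin := hEfin.subset hC'E
    obtain ⟨w, hw⟩ := hCint
    have hC'1 : C' ≠ E₁ := fun h => disjoint_left.1 h13 (h ▸ hw.1) hw.2
    have hC'2 : C' ≠ E₂ := fun h => disjoint_left.1 h23 (h ▸ hw.1) hw.2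
    have hC'3 : ¬ E₃ ⊆ C' := fun h => hCne (hC'min hE₃dep h).symm
    have hC'big : n < C'.ncard := by
      by_contra h
      push_neg at h
      exact hC'dep.1 ((hI C').2 ⟨hC'E, h, hC'1, hC'2, hC'3⟩)
    have hcard' : C'.ncard = n + 1 := by
      by_contra hne'
      obtain ⟨t, htC, htcard⟩ := exists_subset_card_eq (show n + 1 ≤ C'.ncard by omega)
      have htdep : M.Dep t :=
        ⟨fun hind => by have := ((hI t).1 hind).2.1; omega, htC.trans hC'E⟩
      have h' := hC'min htdep htC
      exact hne' (h' ▸ htcard)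
    have keyd : ∀ E' : Set α, E'.ncard = n → {x | C' \ {x} = E'}.Subsingleton := by
      intro E' hcardE' a ha b hb
      simp only [mem_setOf_eq] at ha hb
      have haC : a ∈ C' := by
        by_contra h
        rw [diff_singleton_eq_self h] at ha
        rw [ha, hcardE'] at hcard'
        omega
      by_contra hab
      have haE' : a ∉ E' := by rw [← ha]; simp
      exact haE' (hb ▸ ⟨haC, by simpa using hab⟩)
    have hEx : (C' \ ({x | C' \ {x} = E₁} ∪ {x | C' \ {x} = E₂})).Nonempty := by
      rw [diff_nonempty]
      intro hsub
      have hle := ncard_le_ncard hsub ((keyd E₁ h1).finite.union (keyd E₂ h2).finite)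
      have h2' := ncard_union_le {x | C' \ {x} = E₁} {x | C' \ {x} = E₂}
      have := aux_ncard_le_one_of_subsingleton (keyd E₁ h1)
      have := aux_ncard_le_one_of_subsingleton (keyd E₂ h2)
      omega
    obtain ⟨x, hxC, hxb⟩ := hEx
    simp only [mem_union, mem_setOf_eq, not_or] at hxb
    have hind : M.Indep (C' \ {x}) := (hI _).2 ⟨diff_subset.trans hC'E,
      by rw [ncard_diff_singleton_of_mem hxC, hcard']; omega, hxb.1, hxb.2,
      fun h => hC'3 (h.trans diff_subset)⟩
    have hb' := hbase _ hind (by rw [ncard_diff_singleton_of_mem hxC, hcard']; omega)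
    exact (spanning_iff_exists_isBase_subset hC'E).2 ⟨_, hb', diff_subset⟩
  have hco : M.Coindep E₃ := by
    obtain ⟨A, hAE₁, hAcard⟩ := exists_subset_card_eq (show n - 1 ≤ E₁.ncard by omega)
    obtain ⟨b, hb2⟩ := hne2
    have hbA : b ∉ A := fun h => disjoint_left.1 h12 (hAE₁ h) hb2
    have hBE12 : insert b A ⊆ E₁ ∪ E₂ := insert_subset (Or.inr hb2) (hAE₁.trans subset_union_left)
    have hBcard : (insert b A).ncard = n := by
      rw [ncard_insert_of_notMem hbA (hf1.subset hAE₁), hAcard]; omega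
    obtain ⟨a, haA⟩ : A.Nonempty := nonempty_of_ncard_ne_zero (by omega)
    have hB3 : Disjoint (insert b A) E₃ := by
      refine disjoint_left.2 fun y hy hy3 => ?_
      exact (hBE12 hy).elim (fun h' => disjoint_left.1 h13 h' hy3)
        (fun h' => disjoint_left.1 h23 h' hy3)
    have hBind : M.Indep (insert b A) := (hI _).2 ⟨hBE12.trans (hU ▸ subset_union_left),
      le_of_eq hBcard,
      fun h => disjoint_left.1 h12 (h ▸ mem_insert b A) hb2,
      fun h => disjoint_left.1 h12 (hAE₁ haA) (h ▸ mem_insert_of_mem _ haA),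
      fun h => by obtain ⟨z, hz⟩ := hne3; exact disjoint_left.1 hB3 (h hz) hz⟩
    exact (coindep_iff_exists h3E).2 ⟨insert b A, hbase _ hBind hBcard,
      subset_diff.2 ⟨hBE12.trans (hU ▸ subset_union_left), hB3⟩⟩
  have hdel : M.E \ E₃ = E₁ ∪ E₂ := by
    rw [← hU, union_diff_right,
      Disjoint.sdiff_eq_left (by simp [disjoint_union_left, h13, h23])]
  refine ⟨⟨hcirc, hnspan⟩, hfree, hco, fun I => ?_⟩
  simp only [Matroid.delete', restrict_indep_iff, hdel]
  constructor
  · rintro ⟨hind, hsub⟩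
    obtain ⟨-, hcard, hne1', hne2', -⟩ := (hI I).1 hind
    exact ⟨hsub, hcard, hne1', hne2'⟩
  · rintro ⟨hsub, hcard, hne1', hne2'⟩
    refine ⟨(hI I).2 ⟨hsub.trans (hU ▸ subset_union_left), hcard, hne1', hne2',
      fun h => ?_⟩, hsub⟩
    obtain ⟨z, hz⟩ := hne3
    exact (hsub (h hz)).elim (fun h' => disjoint_left.1 h13 h' hz)
      (fun h' => disjoint_left.1 h23 h' hz)


end Matroid
end

section
/- Let M be a finite matroid with ground set E, and let C be a non-spanning circuit of M that is freely placed and coindependent. Suppose that the deletion M \ C has exactly two non-spanning circuits C₁ and C₂, and that C₁ and C₂ partition E \ C. Then the non-spanning circuits of M are exactly C₁, C₂ and C. -/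
open Set

namespace Matroid

variable {α β : Type*}

lemma restrict_dep_iff' {M : Matroid α} {R D : Set α} (hR : R ⊆ M.E) (hD : D ⊆ R) :
    (M ↾ R).Dep D ↔ M.Dep D := by
  rw [dep_iff, dep_iff, restrict_indep_iff, restrict_ground_eq,
    and_iff_left hD, and_iff_left (hD.trans hR)]
  simp [hD]

lemma circuit_restrict_iff' {M : Matroid α} {R D : Set α} (hR : R ⊆ M.E) (hD : D ⊆ R) :
    (M ↾ R).Circuit D ↔ M.Circuit D := by
  constructor
  · rintro ⟨hdep, hmin⟩
    refine ⟨(restrict_dep_iff' hR hD).1 hdep, fun D' hD' hss ↦ ?_⟩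
    exact hmin ((restrict_dep_iff' hR (hss.trans hD)).2 hD') hss
  · rintro ⟨hdep, hmin⟩
    refine ⟨(restrict_dep_iff' hR hD).2 hdep, fun D' hD' hss ↦ ?_⟩
    exact hmin ((restrict_dep_iff' hR (hss.trans hD)).1 hD') hss

lemma spanning_restrict_of_spanning {M : Matroid α} {R X : Set α} (hR : R ⊆ M.E)
    (hX : X ⊆ R) (h : M.Spanning X) : (M ↾ R).Spanning X := by
  obtain ⟨B, hB, hBX⟩ := h.exists_isBase_subset
  have hB' : (M ↾ R).IsBase B := (isBase_restrict_iff hR).2 (hB.isBasis_of_subset hR (hBX.trans hX))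
  exact hB'.spanning.superset hBX (by rwa [restrict_ground_eq])

lemma spanning_of_spanning_restrict {M : Matroid α} {R X : Set α} (hR : R ⊆ M.E)
    (hRs : M.Spanning R) (h : (M ↾ R).Spanning X) : M.Spanning X := by
  have hX : X ⊆ R := by have := h.subset_ground; rwa [restrict_ground_eq] at this
  obtain ⟨B, hB, hBX⟩ := h.exists_isBase_subset
  rw [isBase_restrict_iff hR] at hB
  have hBsp : M.Spanning B := by
    rw [spanning_iff_closure_eq (hB.indep.subset_ground), hB.closure_eq_closure,
      ← spanning_iff_closure_eq hR]
    exact hRs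
  exact hBsp.superset hBX (hX.trans hR)

/-- If `C` is a freely placed coindependent non-spanning circuit of a finite matroid `M`
and `M \ C` has exactly two non-spanning circuits `C₁` and `C₂` which partition
`E \ C`, then the non-spanning circuits of `M` are exactly `C₁`, `C₂` and `C`. -/
theorem nonspanning_circuits_eq (M : Matroid α) [M.Finite] (C C₁ C₂ : Set α)
    (hC : M.Circuit C) (hCns : ¬ M.Spanning C)
    (hfp : M.FreelyPlaced C) (hco : M.Coindep C)
    (hne : C₁ ≠ C₂)
    (h1 : (M.delete' C).Circuit C₁ ∧ ¬ (M.delete' C).Spanning C₁)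
    (h2 : (M.delete' C).Circuit C₂ ∧ ¬ (M.delete' C).Spanning C₂)
    (honly : ∀ D : Set α, (M.delete' C).Circuit D → ¬ (M.delete' C).Spanning D →
      D = C₁ ∨ D = C₂)
    (hdisj : Disjoint C₁ C₂) (hpart : C₁ ∪ C₂ = M.E \ C) :
    ∀ D : Set α, (M.Circuit D ∧ ¬ M.Spanning D) ↔ (D = C₁ ∨ D = C₂ ∨ D = C) := by
  have hR : M.E \ C ⊆ M.E := diff_subset
  have hRs : M.Spanning (M.E \ C) := hco.compl_spanning
  have hdel : M.delete' C = M ↾ (M.E \ C) := rfl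
  rw [hdel] at h1 h2 honly
  have key : ∀ X : Set α, X ⊆ M.E \ C →
      ((M.Circuit X ∧ ¬ M.Spanning X) ↔
        ((M ↾ (M.E \ C)).Circuit X ∧ ¬ (M ↾ (M.E \ C)).Spanning X)) := by
    intro X hX
    rw [circuit_restrict_iff' hR hX]
    refine and_congr_right fun _ ↦ not_congr ?_
    exact ⟨spanning_restrict_of_spanning hR hX, spanning_of_spanning_restrict hR hRs⟩
  have hsub1 : C₁ ⊆ M.E \ C := by
    have := h1.1.1.subset_ground; rwa [restrict_ground_eq] at this
  have hsub2 : C₂ ⊆ M.E \ C := by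
    have := h2.1.1.subset_ground; rwa [restrict_ground_eq] at this
  intro D
  constructor
  · rintro ⟨hD, hDns⟩
    rcases eq_or_ne D C with rfl | hDC
    · exact Or.inr (Or.inr rfl)
    have hDCint : D ∩ C = ∅ := by
      by_contra h
      exact hDns (hfp hD hDC (nonempty_iff_ne_empty.2 h))
    have hDsub : D ⊆ M.E \ C :=
      subset_diff.2 ⟨hD.1.subset_ground, disjoint_iff_inter_eq_empty.2 hDCint⟩
    obtain ⟨hD', hDns'⟩ := (key D hDsub).1 ⟨hD, hDns⟩
    rcases honly D hD' hDns' with h | h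
    · exact Or.inl h
    · exact Or.inr (Or.inl h)
  · rintro (rfl | rfl | rfl)
    · exact (key D hsub1).2 h1
    · exact (key D hsub2).2 h2
    · exact ⟨hC, hCns⟩

end Matroid
end

section
/- Let M be a finite matroid of rank n ≥ 3 with ground set E, and let e and f be distinct elements of E such that e is free in M, f is free in the dual (M \ e)✶, and the minor (M \ e) / f has rank n − 1 and admits a partition of its ground set into two sets A and B that are both circuit-hyperplanes of (M \ e) / f, with every non-spanning circuit of (M \ e) / f equal to A or to B (so (M \ e) / f is isomorphic to P_{n−1}). Then M is isomorphic to its own dual M✶. (That is, the matroid A_n is self-dual.) -/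
open Set

namespace Matroid

variable {α β : Type*}

section AuxRank

variable {M : Matroid α} {X I C D B : Set α} {x : α}

lemma le_rkOn (hE : M.E.Finite) (hI : M.Indep I) (hIX : I ⊆ X) : I.ncard ≤ M.rkOn X := by
  apply le_csSup
  · refine ⟨M.E.ncard, ?_⟩
    rintro k ⟨J, hJ, hJX, rfl⟩
    exact Set.ncard_le_ncard hJ.subset_ground hE
  · exact ⟨I, hI, hIX, rfl⟩

lemma rkOn_le {k : ℕ} (h : ∀ I, M.Indep I → I ⊆ X → I.ncard ≤ k) : M.rkOn X ≤ k :=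
  csSup_le ⟨0, ∅, M.empty_indep, empty_subset _, by simp⟩
    (by rintro m ⟨I, hI, hIX, rfl⟩; exact h I hI hIX)

lemma IsBase.ncard_eq_rank (hE : M.E.Finite) (hB : M.IsBase B) : B.ncard = M.rank := by
  refine le_antisymm (le_rkOn hE hB.indep hB.subset_ground) (rkOn_le ?_)
  rintro I hI -
  obtain ⟨B', hB', hIB'⟩ := hI.exists_isBase_superset
  calc I.ncard ≤ B'.ncard := Set.ncard_le_ncard hIB' (hE.subset hB'.subset_ground)
    _ = B.ncard := hB'.ncard_eq_ncard_of_isBase hB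

lemma Indep.ncard_le_rank (hE : M.E.Finite) (hI : M.Indep I) : I.ncard ≤ M.rank :=
  le_rkOn hE hI hI.subset_ground

lemma Indep.base_of_ncard (hE : M.E.Finite) (hI : M.Indep I) (h : I.ncard = M.rank) :
    M.IsBase I := by
  obtain ⟨B', hB', hIB'⟩ := hI.exists_isBase_superset
  have hcard := hB'.ncard_eq_rank hE
  rwa [eq_of_subset_of_ncard_le hIB' (by omega) (hE.subset hB'.subset_ground)]

lemma Circuit.diff_singleton_indep (hC : M.Circuit C) (hx : x ∈ C) : M.Indep (C \ {x}) := by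
  by_contra h
  have hdep : M.Dep (C \ {x}) :=
    dep_of_not_indep h (diff_subset.trans hC.1.subset_ground)
  have h2 := hC.2 hdep diff_subset
  rw [← h2] at hx
  exact hx.2 rfl

lemma exists_circuit_subset (hE : M.E.Finite) (hD : M.Dep D) : ∃ C, C ⊆ D ∧ M.Circuit C := by
  have hfin : {X | M.Dep X ∧ X ⊆ D}.Finite :=
    ((hE.subset hD.subset_ground).finite_subsets.subset fun X hX => hX.2)
  obtain ⟨C, ⟨hCdep, hCD⟩, hmin⟩ :=
    Set.Finite.exists_minimal hfin ⟨D, hD, subset_rfl⟩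
  refine ⟨C, hCD, hCdep, fun D' hD' hD'C => ?_⟩
  exact hD'C.antisymm (hmin ⟨hD', hD'C.trans hCD⟩ hD'C)

lemma Circuit.rkOn_add_one (hE : M.E.Finite) (hC : M.Circuit C) : M.rkOn C + 1 = C.ncard := by
  have hCfin := hE.subset hC.1.subset_ground
  obtain ⟨x, hx⟩ := hC.1.nonempty
  have hpos : 0 < C.ncard := (Set.ncard_pos hCfin).2 ⟨x, hx⟩
  have h1 : C.ncard - 1 ≤ M.rkOn C := by
    have := le_rkOn hE (hC.diff_singleton_indep hx) diff_subset
    rwa [Set.ncard_diff_singleton_of_mem hx] at this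
  have h2 : M.rkOn C ≤ C.ncard - 1 := by
    refine rkOn_le fun I hI hIC => ?_
    have hlt : I ≠ C := fun h => (h ▸ hI).not_dep hC.1
    have := Set.ncard_lt_ncard (hIC.ssubset_of_ne hlt) hCfin
    omega
  omega

lemma Circuit.rank_lt_of_spanning (hE : M.E.Finite) (hC : M.Circuit C) (hS : M.Spanning C) :
    M.rank < C.ncard := by
  obtain ⟨B, hB, hBC⟩ := hS.exists_isBase_subset
  have hne : B ≠ C := fun h => (h ▸ hB.indep).not_dep hC.1
  have := Set.ncard_lt_ncard (hBC.ssubset_of_ne hne) (hE.subset hC.1.subset_ground)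
  rwa [hB.ncard_eq_rank hE] at this

end AuxRank
section Sparse

variable {M : Matroid α}

lemma indep_iff_of_base_iff (hE : M.E.Finite) {r : ℕ} {b₁ b₂ : Set α}
    (hr : r + 2 ≤ M.E.ncard) (hb₁ : b₁.ncard = r) (hb₂ : b₂.ncard = r)
    (hbase : ∀ X, M.IsBase X ↔ X ⊆ M.E ∧ X.ncard = r ∧ X ≠ b₁ ∧ X ≠ b₂) :
    ∀ I, M.Indep I ↔ I ⊆ M.E ∧ I.ncard ≤ r ∧ I ≠ b₁ ∧ I ≠ b₂ := by
  intro I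
  constructor
  · intro hI
    obtain ⟨X, hX, hIX⟩ := hI.exists_isBase_superset
    obtain ⟨hXE, hXr, hX1, hX2⟩ := (hbase X).1 hX
    have hXfin : X.Finite := hE.subset hXE
    have hle : I.ncard ≤ r := hXr ▸ Set.ncard_le_ncard hIX hXfin
    refine ⟨hIX.trans hXE, hle, ?_, ?_⟩
    · rintro rfl
      exact hX1 (eq_of_subset_of_ncard_le hIX (by omega) hXfin).symm
    · rintro rfl
      exact hX2 (eq_of_subset_of_ncard_le hIX (by omega) hXfin).symm
  · rintro ⟨hIE, hIr, hI1, hI2⟩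
    have hIfin : I.Finite := hE.subset hIE
    rcases eq_or_lt_of_le hIr with heq | hlt
    · exact ((hbase I).2 ⟨hIE, heq, hI1, hI2⟩).indep
    · obtain ⟨K, hIK, hKE, hKcard⟩ :=
        Set.exists_subsuperset_card_eq (n := r - 1) hIE (by omega) (by omega)
      have hKfin : K.Finite := hE.subset hKE
      have h3 : 3 ≤ (M.E \ K).ncard := by
        rw [Set.ncard_diff hKE hKfin]; omega
      obtain ⟨T, -, hTE, hT3⟩ :=
        Set.exists_subsuperset_card_eq (n := 3) (empty_subset (M.E \ K)) (by simp) h3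
      obtain ⟨x₁, x₂, x₃, h12, h13, h23, rfl⟩ := Set.ncard_eq_three.1 hT3
      have hx₁ : x₁ ∈ M.E \ K := hTE (by simp)
      have hx₂ : x₂ ∈ M.E \ K := hTE (by simp)
      have hx₃ : x₃ ∈ M.E \ K := hTE (by simp)
      have key : ∀ x, x ∈ M.E \ K → (insert x K).ncard = r := fun x hx => by
        rw [Set.ncard_insert_of_notMem hx.2 hKfin]; omega
      have hne : ∀ x y, x ∈ M.E \ K → y ∈ M.E \ K → x ≠ y → insert x K ≠ insert y K := by
        intro x y hx hy hxy h
        have hmem : x ∈ insert y K := h ▸ Set.mem_insert x K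
        rcases hmem with h' | h'
        · exact hxy h'
        · exact hx.2 h'
      have hgood : ∃ x, x ∈ M.E \ K ∧ insert x K ≠ b₁ ∧ insert x K ≠ b₂ := by
        by_contra hcon
        push_neg at hcon
        have hc : ∀ x, x ∈ M.E \ K → insert x K = b₁ ∨ insert x K = b₂ := by
          intro x hx
          by_cases h1 : insert x K = b₁
          · exact Or.inl h1
          · exact Or.inr (hcon x hx h1)
        rcases hc x₁ hx₁ with e1 | e1 <;> rcases hc x₂ hx₂ with e2 | e2 <;>
          rcases hc x₃ hx₃ with e3 | e3 <;>
          first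
          | exact hne x₁ x₂ hx₁ hx₂ h12 (e1.trans e2.symm)
          | exact hne x₁ x₃ hx₁ hx₃ h13 (e1.trans e3.symm)
          | exact hne x₂ x₃ hx₂ hx₃ h23 (e2.trans e3.symm)
      obtain ⟨x, hx, hgood1, hgood2⟩ := hgood
      have hb := (hbase (insert x K)).2
        ⟨Set.insert_subset hx.1 hKE, key x hx, hgood1, hgood2⟩
      exact hb.indep.subset (hIK.trans (Set.subset_insert _ _))

end Sparse
section FreeBase

variable {M : Matroid α}

lemma delete_ground_eq (M : Matroid α) (D : Set α) : (M.delete' D).E = M.E \ D := rfl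

lemma delete'_indep_iff {D I : Set α} :
    (M.delete' D).Indep I ↔ M.Indep I ∧ I ⊆ M.E \ D := restrict_indep_iff

lemma FreeElem.exists_base_not_mem {g : α} (hg : M.FreeElem g) :
    ∃ B, M.IsBase B ∧ g ∉ B := by
  have h := hg.2.1
  unfold Coloop at h
  push_neg at h
  exact h

lemma FreeElem.delete_rank_eq (hE : M.E.Finite) {g : α} (hg : M.FreeElem g) :
    (M.delete' {g}).rank = M.rank := by
  have hE' : (M.delete' {g}).E.Finite := hE.subset diff_subset
  obtain ⟨B₀, hB₀, hgB₀⟩ := hg.exists_base_not_mem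
  have hB₀' : (M.delete' {g}).IsBase B₀ := by
    refine Indep.isBase_of_maximal ?_ fun J hJ hBJ => ?_
    · exact delete'_indep_iff.2 ⟨hB₀.indep, subset_diff_singleton hB₀.subset_ground hgB₀⟩
    · exact hB₀.eq_of_subset_indep (delete'_indep_iff.1 hJ).1 hBJ
  rw [← hB₀'.ncard_eq_rank hE', hB₀.ncard_eq_rank hE]

lemma FreeElem.insert_indep (hE : M.E.Finite) {g : α} (hg : M.FreeElem g) {J : Set α}
    (hgJ : g ∉ J) (hJ : M.Indep J) (hJr : J.ncard < M.rank) : M.Indep (insert g J) := by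
  by_contra hdep
  have hsub : insert g J ⊆ M.E := Set.insert_subset hg.1 hJ.subset_ground
  obtain ⟨C, hCsub, hC⟩ := exists_circuit_subset hE (dep_of_not_indep hdep hsub)
  have hgC : g ∈ C := by
    by_contra hgC
    have : C ⊆ J := fun x hx => by
      rcases hCsub hx with h | h
      · exact absurd (h ▸ hx) hgC
      · exact h
    exact (hJ.subset this).not_dep hC.1
  have hsp := hg.2.2 hC hgC
  have hlt := hC.rank_lt_of_spanning hE hsp
  have hle : C.ncard ≤ (insert g J).ncard :=
    Set.ncard_le_ncard hCsub (hE.subset hsub)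
  rw [Set.ncard_insert_of_notMem hgJ (hE.subset hJ.subset_ground)] at hle
  omega

lemma FreeElem.base_iff (hE : M.E.Finite) {g : α} (hg : M.FreeElem g)
    {Y : Set α} :
    M.IsBase Y ↔ ((g ∉ Y ∧ (M.delete' {g}).IsBase Y) ∨
      (g ∈ Y ∧ (M.delete' {g}).Indep (Y \ {g}) ∧ (Y \ {g}).ncard + 1 = M.rank)) := by
  have hE' : (M.delete' {g}).E.Finite := hE.subset diff_subset
  have hrkeq := hg.delete_rank_eq hE
  constructor
  · intro hY
    have hYfin : Y.Finite := hE.subset hY.subset_ground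
    by_cases hgY : g ∈ Y
    · refine Or.inr ⟨hgY, delete'_indep_iff.2 ⟨hY.indep.diff _,
        diff_subset_diff_left hY.subset_ground⟩, ?_⟩
      rw [Set.ncard_diff_singleton_add_one hgY hYfin, hY.ncard_eq_rank hE]
    · refine Or.inl ⟨hgY, ?_⟩
      have hind : (M.delete' {g}).Indep Y :=
        delete'_indep_iff.2 ⟨hY.indep, subset_diff_singleton hY.subset_ground hgY⟩
      exact hind.base_of_ncard hE' (by rw [hrkeq, hY.ncard_eq_rank hE])
  · rintro (⟨hgY, hYb⟩ | ⟨hgY, hind, hcard⟩)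
    · exact ((delete'_indep_iff.1 hYb.indep).1).base_of_ncard hE
        (by rw [hYb.ncard_eq_rank hE', hrkeq])
    · have hJ : M.Indep (Y \ {g}) := (delete'_indep_iff.1 hind).1
      have hins : M.Indep (insert g (Y \ {g})) :=
        hg.insert_indep hE (by simp) hJ (by omega)
      rw [Set.insert_diff_singleton, Set.insert_eq_of_mem hgY] at hins
      refine hins.base_of_ncard hE ?_
      have : Y.ncard = (Y \ {g}).ncard + 1 := by
        rw [Set.ncard_diff_singleton_add_one hgY (hE.subset hins.subset_ground)]
      omega

end FreeBase
section MoreHelpers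

lemma diff_eq_iff_eq_diff' {G X W : Set α} (hX : X ⊆ G) (hW : W ⊆ G) :
    G \ X = W ↔ X = G \ W := by
  constructor <;> rintro rfl
  · rw [Set.diff_diff_cancel_left hX]
  · rw [Set.diff_diff_cancel_left hW]

end MoreHelpers
/-- The matroid `A_n` is self-dual : if `M` is a finite matroid of rank `n ≥ 3` with
distinct elements `e` and `f` such that `e` is free in `M`, `f` is free in `(M \ e)✶`,
and `(M \ e) / f` is a copy of `P_{n-1}`, then `M` is isomorphic to its dual. -/
theorem an_self_dual (M : Matroid α) [M.Finite] (n : ℕ) (hn : 3 ≤ n) (hr : M.rank = n)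
    (e f : α) (he : e ∈ M.E) (hf : f ∈ M.E) (hef : e ≠ f)
    (hfree : M.FreeElem e) (hfree' : ((M.delete' {e})✶).FreeElem f)
    (A B : Set α)
    (hrk : ((M.delete' {e}).contract' {f}).rank = n - 1)
    (hAB : Disjoint A B) (hU : A ∪ B = ((M.delete' {e}).contract' {f}).E)
    (hA : ((M.delete' {e}).contract' {f}).Circuit A ∧
      ((M.delete' {e}).contract' {f}).Hyperplane A)
    (hB : ((M.delete' {e}).contract' {f}).Circuit B ∧
      ((M.delete' {e}).contract' {f}).Hyperplane B)
    (hns : ∀ C : Set α, ((M.delete' {e}).contract' {f}).Circuit C →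
      ¬ ((M.delete' {e}).contract' {f}).Spanning C → C = A ∨ C = B) :
    M.IsIso M✶ := by
  have hME : M.E.Finite := M.ground_finite
  set D : Matroid α := M.delete' {e} with hDdef
  set N : Matroid α := D.contract' {f} with hNdef
  have hNE : N.E = (M.E \ {e}) \ {f} := rfl
  have hDE : D.E = M.E \ {e} := rfl
  have hD'E : (D✶).E = M.E \ {e} := rfl
  have hNdual : N✶ = D✶.delete' {f} := by
    rw [hNdef, Matroid.contract', dual_dual]
  have hN'E : (N✶).E = N.E := rfl
  -- finiteness
  have hDfin : D.E.Finite := hME.subset diff_subset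
  have hNfin : N.E.Finite := hME.subset (diff_subset.trans diff_subset)
  have hN'fin : (N✶).E.Finite := hNfin
  have hD'fin : (D✶).E.Finite := hDfin
  have hM'fin : (M✶).E.Finite := hME
  -- basic membership facts
  have hfD : f ∈ D.E := ⟨hf, fun h => hef h.symm⟩
  have heN : e ∉ N.E := fun h => h.1.2 rfl
  have hfN : f ∉ N.E := fun h => h.2 rfl
  have hASub : A ⊆ N.E := hU ▸ subset_union_left
  have hBSub : B ⊆ N.E := hU ▸ subset_union_right
  have heA : e ∉ A := fun h => heN (hASub h)
  have hfA : f ∉ A := fun h => hfN (hASub h)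
  have heB : e ∉ B := fun h => heN (hBSub h)
  have hfB : f ∉ B := fun h => hfN (hBSub h)
  have hAfin : A.Finite := hNfin.subset hASub
  have hBfin : B.Finite := hNfin.subset hBSub
  -- cardinalities
  have hAcard : A.ncard = n - 1 := by
    have h1 := hA.1.rkOn_add_one hNfin
    have h2 := hA.2.2
    rw [hrk] at h2
    omega
  have hBcard : B.ncard = n - 1 := by
    have h1 := hB.1.rkOn_add_one hNfin
    have h2 := hB.2.2
    rw [hrk] at h2
    omega
  have hScard : N.E.ncard = 2 * n - 2 := by
    rw [← hU, Set.ncard_union_eq hAB hAfin hBfin, hAcard, hBcard]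
    omega
  -- Step: base characterization of N
  have hNbase : ∀ X, N.IsBase X ↔ X ⊆ N.E ∧ X.ncard = n - 1 ∧ X ≠ A ∧ X ≠ B := by
    intro X
    constructor
    · intro hX
      refine ⟨hX.subset_ground, by rw [hX.ncard_eq_rank hNfin, hrk], ?_, ?_⟩
      · rintro rfl
        exact hX.indep.not_dep hA.1.1
      · rintro rfl
        exact hX.indep.not_dep hB.1.1
    · rintro ⟨hXE, hXcard, hXA, hXB⟩
      have hXfin : X.Finite := hNfin.subset hXE
      have hXind : N.Indep X := by
        by_contra hdep
        obtain ⟨C, hCX, hC⟩ := exists_circuit_subset hNfin (dep_of_not_indep hdep hXE)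
        by_cases hsp : N.Spanning C
        · have h1 := hC.rank_lt_of_spanning hNfin hsp
          have h2 : C.ncard ≤ X.ncard := Set.ncard_le_ncard hCX hXfin
          rw [hrk] at h1
          omega
        · rcases hns C hC hsp with rfl | rfl
          · exact hXA (eq_of_subset_of_ncard_le hCX (by omega) hXfin).symm
          · exact hXB (eq_of_subset_of_ncard_le hCX (by omega) hXfin).symm
      exact hXind.base_of_ncard hNfin (by rw [hrk, hXcard])
  -- complements within N.E
  have hSdiffA : N.E \ A = B := by
    rw [← hU, Set.union_diff_cancel_left (Set.disjoint_iff.1 hAB)]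
  have hSdiffB : N.E \ B = A := by
    rw [← hU, Set.union_diff_cancel_right (Set.disjoint_iff.1 hAB)]
  -- Step: base characterization of N✶
  have hN'base : ∀ X, (N✶).IsBase X ↔ X ⊆ N.E ∧ X.ncard = n - 1 ∧ X ≠ A ∧ X ≠ B := by
    intro X
    rw [dual_isBase_iff', hNbase]
    constructor
    · rintro ⟨⟨-, hcard, hdA, hdB⟩, hXE⟩
      have hXfin : X.Finite := hNfin.subset hXE
      have hcc : (N.E \ X).ncard = N.E.ncard - X.ncard := Set.ncard_diff hXE hXfin
      have hXle : X.ncard ≤ N.E.ncard := Set.ncard_le_ncard hXE hNfin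
      refine ⟨hXE, by omega, ?_, ?_⟩
      · rintro rfl
        exact hdB hSdiffA
      · rintro rfl
        exact hdA hSdiffB
    · rintro ⟨hXE, hcard, hXA, hXB⟩
      have hXfin : X.Finite := hNfin.subset hXE
      have hcc : (N.E \ X).ncard = N.E.ncard - X.ncard := Set.ncard_diff hXE hXfin
      refine ⟨⟨diff_subset, by omega, ?_, ?_⟩, hXE⟩
      · rw [Ne, diff_eq_iff_eq_diff' hXE hASub, hSdiffA]
        exact hXB
      · rw [Ne, diff_eq_iff_eq_diff' hXE hBSub, hSdiffB]
        exact hXA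
  -- Step: independence characterization of N✶
  have hN'indep : ∀ I, (N✶).Indep I ↔ I ⊆ N.E ∧ I.ncard ≤ n - 1 ∧ I ≠ A ∧ I ≠ B :=
    indep_iff_of_base_iff hN'fin (by rw [show (N✶).E = N.E from rfl, hScard]; omega) hAcard hBcard hN'base
  -- rank of N✶ and D✶
  have hN'rank : (N✶).rank = n - 1 := by
    obtain ⟨X₀, hX₀⟩ := (N✶).exists_isBase
    rw [← hX₀.ncard_eq_rank hN'fin, ((hN'base X₀).1 hX₀).2.1]
  have hD'rank : (D✶).rank = n - 1 := by
    have h := hfree'.delete_rank_eq hD'fin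
    rw [← hNdual, hN'rank] at h
    exact h.symm
  -- Step: base characterization of D✶
  have hD'base : ∀ Y, (D✶).IsBase Y ↔ Y ⊆ N.E ∪ {f} ∧ Y.ncard = n - 1 ∧ Y ≠ A ∧ Y ≠ B := by
    intro Y
    rw [hfree'.base_iff hD'fin, ← hNdual, hD'rank]
    constructor
    · rintro (⟨hfY, hYb⟩ | ⟨hfY, hYind, hYcard⟩)
      · obtain ⟨hYE, hYcard, hYA, hYB⟩ := (hN'base Y).1 hYb
        exact ⟨hYE.trans subset_union_left, hYcard, hYA, hYB⟩
      · obtain ⟨hYE, -, -, -⟩ := (hN'indep _).1 hYind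
        have hYfin : Y.Finite := (hNfin.union (Set.finite_singleton f)).subset
          (fun x hx => by
            rcases eq_or_ne x f with rfl | hxf
            · exact Or.inr rfl
            · exact Or.inl (hYE ⟨hx, hxf⟩))
        refine ⟨fun x hx => ?_, ?_, fun h => hfA (h ▸ hfY), fun h => hfB (h ▸ hfY)⟩
        · rcases eq_or_ne x f with rfl | hxf
          · exact Or.inr rfl
          · exact Or.inl (hYE ⟨hx, hxf⟩)
        · rw [← Set.ncard_diff_singleton_add_one hfY hYfin]
          omega
    · rintro ⟨hYE, hYcard, hYA, hYB⟩
      have hYfin : Y.Finite := (hNfin.union (Set.finite_singleton f)).subset hYE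
      by_cases hfY : f ∈ Y
      · refine Or.inr ⟨hfY, (hN'indep _).2 ⟨?_, ?_, ?_, ?_⟩, ?_⟩
        · intro x hx
          rcases hYE hx.1 with h | h
          · exact h
          · exact absurd h hx.2
        · have := Set.ncard_diff_singleton_add_one hfY hYfin
          omega
        · intro h
          have := Set.ncard_diff_singleton_add_one hfY hYfin
          rw [h, hAcard] at this
          omega
        · intro h
          have := Set.ncard_diff_singleton_add_one hfY hYfin
          rw [h, hBcard] at this
          omega
        · rw [Set.ncard_diff_singleton_add_one hfY hYfin, hYcard]
      · refine Or.inl ⟨hfY, (hN'base Y).2 ⟨fun x hx => ?_, hYcard, hYA, hYB⟩⟩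
        rcases hYE hx with h | h
        · exact h
        · exact absurd h (by rintro rfl; exact hfY hx)
  -- ground set of D
  have hGE : N.E ∪ {f} = D.E := by
    rw [hNE, hDE]
    exact Set.diff_union_of_subset (Set.singleton_subset_iff.2 hfD)
  have hDcard : D.E.ncard = 2 * n - 1 := by
    rw [← hGE, Set.ncard_union_eq (Set.disjoint_singleton_right.2 hfN) hNfin
      (Set.finite_singleton f), hScard, Set.ncard_singleton]
    omega
  have hDdiffA : D.E \ A = B ∪ {f} := by
    rw [← hGE, Set.union_diff_distrib, hSdiffA]
    congr 1
    ext x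
    simp only [Set.mem_diff, Set.mem_singleton_iff]
    exact ⟨fun h => h.1, fun h => ⟨h, fun hx => hfA (by rwa [h] at hx)⟩⟩
  have hDdiffB : D.E \ B = A ∪ {f} := by
    rw [← hGE, Set.union_diff_distrib, hSdiffB]
    congr 1
    ext x
    simp only [Set.mem_diff, Set.mem_singleton_iff]
    exact ⟨fun h => h.1, fun h => ⟨h, fun hx => hfB (by rwa [h] at hx)⟩⟩
  have hNEsubD : N.E ⊆ D.E := by
    rw [← hGE]; exact subset_union_left
  have hAfSub : A ∪ {f} ⊆ D.E := by
    rw [← hGE]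
    exact Set.union_subset (hASub.trans subset_union_left) subset_union_right
  have hBfSub : B ∪ {f} ⊆ D.E := by
    rw [← hGE]
    exact Set.union_subset (hBSub.trans subset_union_left) subset_union_right
  have hAfcard : (A ∪ {f}).ncard = n := by
    rw [Set.ncard_union_eq (Set.disjoint_singleton_right.2 hfA) hAfin
      (Set.finite_singleton f), hAcard, Set.ncard_singleton]
    omega
  have hBfcard : (B ∪ {f}).ncard = n := by
    rw [Set.ncard_union_eq (Set.disjoint_singleton_right.2 hfB) hBfin
      (Set.finite_singleton f), hBcard, Set.ncard_singleton]
    omega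
  -- Step: base characterization of D
  have hDbase : ∀ Z, D.IsBase Z ↔ Z ⊆ D.E ∧ Z.ncard = n ∧ Z ≠ A ∪ {f} ∧ Z ≠ B ∪ {f} := by
    intro Z
    have hdd : D.IsBase Z ↔ (D✶)✶.IsBase Z := by rw [dual_dual]
    rw [hdd, dual_isBase_iff', hD'base]
    simp only [dual_ground]
    constructor
    · rintro ⟨⟨-, hcard, hdA, hdB⟩, hZE⟩
      have hZfin : Z.Finite := hDfin.subset hZE
      have hcc : (D.E \ Z).ncard = D.E.ncard - Z.ncard := Set.ncard_diff hZE hZfin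
      have hZle : Z.ncard ≤ D.E.ncard := Set.ncard_le_ncard hZE hDfin
      refine ⟨hZE, by omega, ?_, ?_⟩
      · rintro rfl
        exact hdB (by rw [diff_eq_iff_eq_diff' hAfSub (hBSub.trans hNEsubD), hDdiffB])
      · rintro rfl
        exact hdA (by rw [diff_eq_iff_eq_diff' hBfSub (hASub.trans hNEsubD), hDdiffA])
    · rintro ⟨hZE, hcard, hZA, hZB⟩
      have hZfin : Z.Finite := hDfin.subset hZE
      have hcc : (D.E \ Z).ncard = D.E.ncard - Z.ncard := Set.ncard_diff hZE hZfin
      refine ⟨⟨by rw [← hGE] at hZE ⊢; exact Set.diff_subset, by omega, ?_, ?_⟩, hZE⟩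
      · rw [Ne, diff_eq_iff_eq_diff' hZE (hASub.trans hNEsubD), hDdiffA]
        exact hZB
      · rw [Ne, diff_eq_iff_eq_diff' hZE (hBSub.trans hNEsubD), hDdiffB]
        exact hZA
  -- Step: independence characterization of D
  have hDindep : ∀ I, D.Indep I ↔ I ⊆ D.E ∧ I.ncard ≤ n ∧ I ≠ A ∪ {f} ∧ I ≠ B ∪ {f} :=
    indep_iff_of_base_iff hDfin (by omega) hAfcard hBfcard hDbase
  -- ground set of M
  have heD : e ∉ D.E := fun h => h.2 rfl
  have hMEeq : D.E ∪ {e} = M.E := by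
    rw [hDE]
    exact Set.diff_union_of_subset (Set.singleton_subset_iff.2 he)
  have hDsubM : D.E ⊆ M.E := by rw [← hMEeq]; exact subset_union_left
  have hMcard : M.E.ncard = 2 * n := by
    rw [← hMEeq, Set.ncard_union_eq (Set.disjoint_singleton_right.2 heD) hDfin
      (Set.finite_singleton e), hDcard, Set.ncard_singleton]
    omega
  have heAf : e ∉ A ∪ {f} := by
    rintro (h | h)
    · exact heA h
    · exact hef (Set.mem_singleton_iff.1 h)
  have heBf : e ∉ B ∪ {f} := by
    rintro (h | h)
    · exact heB h
    · exact hef (Set.mem_singleton_iff.1 h)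
  -- Step: base characterization of M
  have hMbase : ∀ W, M.IsBase W ↔ W ⊆ M.E ∧ W.ncard = n ∧ W ≠ A ∪ {f} ∧ W ≠ B ∪ {f} := by
    intro W
    rw [hfree.base_iff hME, hr]
    constructor
    · rintro (⟨heW, hWb⟩ | ⟨heW, hWind, hWcard⟩)
      · obtain ⟨hWE, hWcard, hWA, hWB⟩ := (hDbase W).1 hWb
        exact ⟨hWE.trans hDsubM, hWcard, hWA, hWB⟩
      · obtain ⟨hWE, -, -, -⟩ := (hDindep _).1 hWind
        have hWfin : W.Finite := (hDfin.union (Set.finite_singleton e)).subset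
          (fun x hx => by
            rcases eq_or_ne x e with rfl | hxe
            · exact Or.inr rfl
            · exact Or.inl (hWE ⟨hx, hxe⟩))
        refine ⟨fun x hx => ?_, ?_, fun h => heAf (h ▸ heW), fun h => heBf (h ▸ heW)⟩
        · rcases eq_or_ne x e with rfl | hxe
          · exact he
          · exact hDsubM (hWE ⟨hx, hxe⟩)
        · rw [← Set.ncard_diff_singleton_add_one heW hWfin]
          omega
    · rintro ⟨hWE, hWcard, hWA, hWB⟩
      have hWfin : W.Finite := hME.subset hWE
      by_cases heW : e ∈ W
      · refine Or.inr ⟨heW, (hDindep _).2 ⟨?_, ?_, ?_, ?_⟩, ?_⟩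
        · intro x hx
          exact ⟨hWE hx.1, hx.2⟩
        · have := Set.ncard_diff_singleton_add_one heW hWfin
          omega
        · intro h
          have := Set.ncard_diff_singleton_add_one heW hWfin
          rw [h, hAfcard] at this
          omega
        · intro h
          have := Set.ncard_diff_singleton_add_one heW hWfin
          rw [h, hBfcard] at this
          omega
        · rw [Set.ncard_diff_singleton_add_one heW hWfin, hWcard]
      · refine Or.inl ⟨heW, (hDbase W).2 ⟨fun x hx => ⟨hWE hx, ?_⟩, hWcard, hWA, hWB⟩⟩
        rintro rfl
        exact heW hx
  -- Step: independence characterization of M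
  have hMindep : ∀ I, M.Indep I ↔ I ⊆ M.E ∧ I.ncard ≤ n ∧ I ≠ A ∪ {f} ∧ I ≠ B ∪ {f} :=
    indep_iff_of_base_iff hME (by omega) hAfcard hBfcard hMbase
  -- membership description of M.E
  have hBA : ∀ x, x ∈ B → x ∉ A := fun x hx h => Set.disjoint_left.1 hAB h hx
  have hAmem : ∀ x, x ∈ A → x ∈ N.E := fun x hx => hASub hx
  have hmemME : ∀ x, x ∈ M.E ↔ (x ∈ A ∨ x ∈ B ∨ x = e ∨ x = f) := by
    intro x
    rw [← hMEeq, ← hGE, ← hU]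
    simp only [Set.mem_union, Set.mem_singleton_iff]
    tauto
  -- complement identities in M.E
  have hcompAf : M.E \ (A ∪ {f}) = B ∪ {e} := by
    ext x
    simp only [Set.mem_diff, Set.mem_union, Set.mem_singleton_iff, hmemME]
    constructor
    · rintro ⟨h1, h2⟩
      push_neg at h2
      tauto
    · rintro (h | rfl)
      · refine ⟨Or.inr (Or.inl h), ?_⟩
        push_neg
        exact ⟨hBA x h, fun hx => hfB (hx ▸ h)⟩
      · refine ⟨Or.inr (Or.inr (Or.inl rfl)), ?_⟩
        push_neg
        exact ⟨heA, hef⟩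
  have hcompBf : M.E \ (B ∪ {f}) = A ∪ {e} := by
    ext x
    simp only [Set.mem_diff, Set.mem_union, Set.mem_singleton_iff, hmemME]
    constructor
    · rintro ⟨h1, h2⟩
      push_neg at h2
      tauto
    · rintro (h | rfl)
      · refine ⟨Or.inl h, ?_⟩
        push_neg
        exact ⟨fun hx => hBA x hx h, fun hx => hfA (hx ▸ h)⟩
      · refine ⟨Or.inr (Or.inr (Or.inl rfl)), ?_⟩
        push_neg
        exact ⟨heB, hef⟩
  have hAeSub : A ∪ {e} ⊆ M.E := by
    rw [← hcompBf]
    exact Set.diff_subset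
  have hBeSub : B ∪ {e} ⊆ M.E := by
    rw [← hcompAf]
    exact Set.diff_subset
  have hAfSubM : A ∪ {f} ⊆ M.E := hAfSub.trans hDsubM
  have hBfSubM : B ∪ {f} ⊆ M.E := hBfSub.trans hDsubM
  have hAecard : (A ∪ {e}).ncard = n := by
    rw [Set.ncard_union_eq (Set.disjoint_singleton_right.2 heA) hAfin
      (Set.finite_singleton e), hAcard, Set.ncard_singleton]
    omega
  have hBecard : (B ∪ {e}).ncard = n := by
    rw [Set.ncard_union_eq (Set.disjoint_singleton_right.2 heB) hBfin
      (Set.finite_singleton e), hBcard, Set.ncard_singleton]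
    omega
  -- Step: base characterization of M✶
  have hM'base : ∀ Y, (M✶).IsBase Y ↔ Y ⊆ M.E ∧ Y.ncard = n ∧ Y ≠ A ∪ {e} ∧ Y ≠ B ∪ {e} := by
    intro Y
    rw [dual_isBase_iff', hMbase]
    constructor
    · rintro ⟨⟨-, hcard, hdA, hdB⟩, hYE⟩
      have hYfin : Y.Finite := hME.subset hYE
      have hcc : (M.E \ Y).ncard = M.E.ncard - Y.ncard := Set.ncard_diff hYE hYfin
      have hYle : Y.ncard ≤ M.E.ncard := Set.ncard_le_ncard hYE hME
      refine ⟨hYE, by omega, ?_, ?_⟩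
      · rintro rfl
        exact hdB (by rw [diff_eq_iff_eq_diff' hAeSub hBfSubM, hcompBf])
      · rintro rfl
        exact hdA (by rw [diff_eq_iff_eq_diff' hBeSub hAfSubM, hcompAf])
    · rintro ⟨hYE, hcard, hYA, hYB⟩
      have hYfin : Y.Finite := hME.subset hYE
      have hcc : (M.E \ Y).ncard = M.E.ncard - Y.ncard := Set.ncard_diff hYE hYfin
      refine ⟨⟨Set.diff_subset, by omega, ?_, ?_⟩, hYE⟩
      · rw [Ne, diff_eq_iff_eq_diff' hYE hAfSubM, hcompAf]
        exact hYB
      · rw [Ne, diff_eq_iff_eq_diff' hYE hBfSubM, hcompBf]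
        exact hYA
  -- Step: independence characterization of M✶
  have hM'indep : ∀ I, (M✶).Indep I ↔ I ⊆ M.E ∧ I.ncard ≤ n ∧ I ≠ A ∪ {e} ∧ I ≠ B ∪ {e} :=
    indep_iff_of_base_iff hM'fin
      (by rw [show (M✶).E = M.E from rfl]; omega) hAecard hBecard hM'base
  -- the isomorphism is the transposition of e and f
  classical
  set σ : α → α := fun x => Equiv.swap e f x with hσdef
  have hσinv : ∀ x, σ (σ x) = x := fun x => Equiv.swap_apply_self e f x
  have hσinj : Function.Injective σ := (Equiv.swap e f).injective
  have hσe : σ e = f := Equiv.swap_apply_left e f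
  have hσf : σ f = e := Equiv.swap_apply_right e f
  have hσfix : ∀ x, x ≠ e → x ≠ f → σ x = x := fun x h1 h2 =>
    Equiv.swap_apply_of_ne_of_ne h1 h2
  have hσE : ∀ x, x ∈ M.E → σ x ∈ M.E := by
    intro x hx
    rcases eq_or_ne x e with rfl | hxe
    · rw [hσe]; exact hf
    rcases eq_or_ne x f with rfl | hxf
    · rw [hσf]; exact he
    · rw [hσfix x hxe hxf]; exact hx
  have hσσ : ∀ T : Set α, σ '' (σ '' T) = T := by
    intro T
    rw [Set.image_image]
    simp only [hσinv]
    exact Set.image_id T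
  have himgiff : ∀ J W : Set α, σ '' J = W ↔ J = σ '' W := fun J W =>
    ⟨fun h => by rw [← h, hσσ], fun h => by rw [h, hσσ]⟩
  have hσA : σ '' A = A := by
    have hfix : ∀ x ∈ A, σ x = x := fun x hx =>
      hσfix x (fun h => heA (h ▸ hx)) (fun h => hfA (h ▸ hx))
    rw [Set.image_congr hfix]
    exact Set.image_id A
  have hσB : σ '' B = B := by
    have hfix : ∀ x ∈ B, σ x = x := fun x hx =>
      hσfix x (fun h => heB (h ▸ hx)) (fun h => hfB (h ▸ hx))
    rw [Set.image_congr hfix]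
    exact Set.image_id B
  have hσAe : σ '' (A ∪ {e}) = A ∪ {f} := by
    rw [Set.image_union, hσA, Set.image_singleton, hσe]
  have hσBe : σ '' (B ∪ {e}) = B ∪ {f} := by
    rw [Set.image_union, hσB, Set.image_singleton, hσe]
  have hkey : ∀ J, J ⊆ M.E → (M.Indep J ↔ (M✶).Indep (σ '' J)) := by
    intro J hJ
    rw [hMindep, hM'indep]
    have hcard : (σ '' J).ncard = J.ncard := Set.ncard_image_of_injective J hσinj
    have hsub : σ '' J ⊆ M.E := by
      rintro y ⟨x, hx, rfl⟩
      exact hσE x (hJ hx)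
    have h1 : σ '' J = A ∪ {e} ↔ J = A ∪ {f} := by rw [himgiff, hσAe]
    have h2 : σ '' J = B ∪ {e} ↔ J = B ∪ {f} := by rw [himgiff, hσBe]
    constructor
    · rintro ⟨-, hc, hA1, hB1⟩
      exact ⟨hsub, by omega, fun h => hA1 (h1.1 h), fun h => hB1 (h2.1 h)⟩
    · rintro ⟨-, hc, hA1, hB1⟩
      exact ⟨hJ, by omega, fun h => hA1 (h1.2 h), fun h => hB1 (h2.2 h)⟩
  refine ⟨⟨fun x => ⟨σ x.1, hσE x.1 x.2⟩, fun y => ⟨σ y.1, hσE y.1 y.2⟩,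
    fun x => Subtype.ext (hσinv x.1), fun y => Subtype.ext (hσinv y.1)⟩, fun I => ?_⟩
  have himgI : Subtype.val ''
      ((⟨fun x => ⟨σ x.1, hσE x.1 x.2⟩, fun y => ⟨σ y.1, hσE y.1 y.2⟩,
        fun x => Subtype.ext (hσinv x.1), fun y => Subtype.ext (hσinv y.1)⟩ :
        M.E ≃ (M✶).E) '' I) = σ '' (Subtype.val '' I) := by
    rw [Set.image_image, Set.image_image]
    rfl
  rw [himgI]
  exact hkey _ (Subtype.coe_image_subset _ _)

end Matroid
end

section
/- Let M be a tipless spike of rank r ≥ 5 with legs L₁, …, L_r, and let X be a two-element subset of the ground set of M. Then X is a leg of M (that is, X = L_i for some i) if and only if there exist two distinct circuits C₁ and C₂ of M, each of cardinality four, such that X = C₁ ∩ C₂. -/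
open Set

namespace Matroid

variable {α β : Type*}

lemma aux_inter {r : ℕ} (L : Fin r → Set α)
    (hdisj : ∀ i j : Fin r, i ≠ j → Disjoint (L i) (L j))
    {a b c : Fin r} (hbc : b ≠ c) :
    (L a ∪ L b) ∩ (L a ∪ L c) = L a := by
  ext x
  simp only [mem_inter_iff, mem_union]
  constructor
  · rintro ⟨ha | hb, ha' | hc⟩
    · exact ha
    · exact ha
    · exact ha'
    · exact absurd hc (Set.disjoint_left.mp (hdisj b c hbc) hb)
  · exact fun h => ⟨Or.inl h, Or.inl h⟩

/-- In a tipless spike of rank `r ≥ 5`, a two-element subset `X` of the ground set is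
a leg iff `X` is the intersection of two distinct four-element circuits. -/
theorem spike_leg_iff (M : Matroid α) [M.Finite] (r : ℕ) (hr5 : 5 ≤ r)
    (hrk : M.rank = r) (L : Fin r → Set α)
    (hdisj : ∀ i j : Fin r, i ≠ j → Disjoint (L i) (L j))
    (hcard : ∀ i : Fin r, (L i).ncard = 2)
    (hground : (⋃ i : Fin r, L i) = M.E)
    (hlegs : ∀ i j : Fin r, i ≠ j → M.Circuit (L i ∪ L j))
    (hns : ∀ C : Set α, M.Circuit C → ¬ M.Spanning C →
      (¬ ∃ i j : Fin r, i ≠ j ∧ C = L i ∪ L j) →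
      (M.Hyperplane C ∧ ∀ i : Fin r, (C ∩ L i).ncard = 1))
    (X : Set α) (hX : X ⊆ M.E) (hX2 : X.ncard = 2) :
    (∃ i : Fin r, X = L i) ↔
      ∃ C₁ C₂ : Set α, M.Circuit C₁ ∧ M.Circuit C₂ ∧ C₁ ≠ C₂ ∧
        C₁.ncard = 4 ∧ C₂.ncard = 4 ∧ X = C₁ ∩ C₂ := by

  classical
  have hLE : ∀ i : Fin r, L i ⊆ M.E := fun i => hground ▸ subset_iUnion L i
  have hLfin : ∀ i : Fin r, (L i).Finite := fun i => M.set_finite _ (hLE i)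
  have hLne : ∀ i : Fin r, (L i).Nonempty := fun i =>
    nonempty_of_ncard_ne_zero (by rw [hcard i]; norm_num)
  have hU4 : ∀ i j : Fin r, i ≠ j → (L i ∪ L j).ncard = 4 := by
    intro i j hij
    rw [ncard_union_eq (hdisj i j hij) (hLfin i) (hLfin j), hcard i, hcard j]
  constructor
  · rintro ⟨i, rfl⟩
    have hcompl : 1 < ({i}ᶜ : Finset (Fin r)).card := by
      rw [Finset.card_compl, Finset.card_singleton, Fintype.card_fin]
      omega
    obtain ⟨j, hj, k, hk, hjk⟩ := Finset.one_lt_card.mp hcompl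
    rw [Finset.mem_compl, Finset.mem_singleton] at hj hk
    refine ⟨L i ∪ L j, L i ∪ L k, hlegs i j (Ne.symm hj), hlegs i k (Ne.symm hk),
      ?_, hU4 i j (Ne.symm hj), hU4 i k (Ne.symm hk),
      (aux_inter L hdisj hjk).symm⟩
    intro h
    obtain ⟨x, hx⟩ := hLne j
    have hx1 : x ∈ L i ∪ L k := h ▸ Or.inr hx
    rcases hx1 with h1 | h1
    · exact Set.disjoint_left.mp (hdisj j i hj) hx h1
    · exact Set.disjoint_left.mp (hdisj j k hjk) hx h1
  · rintro ⟨C₁, C₂, hC1, hC2, hne, h41, h42, hXeq⟩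
    have key : ∀ C : Set α, M.Circuit C → C.ncard = 4 →
        ∃ i j : Fin r, i ≠ j ∧ C = L i ∪ L j := by
      intro C hC h4
      have hCE : C ⊆ M.E := hC.1.2
      have hCfin : C.Finite := M.set_finite C hCE
      by_cases hsp : M.Spanning C
      · exfalso
        obtain ⟨e, he⟩ : C.Nonempty := nonempty_of_ncard_ne_zero (by omega)
        have hI : M.Indep (C \ {e}) := by
          rw [← not_dep_iff (diff_subset.trans hCE)]
          intro hd
          have heq := hC.2 hd diff_subset
          have : e ∈ C \ {e} := heq.symm ▸ he
          exact this.2 rfl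
        have hcl : e ∈ M.closure (C \ {e}) := by
          have hdep : M.Dep (insert e (C \ {e})) := by
            rw [insert_diff_singleton, insert_eq_of_mem he]
            exact hC.1
          exact (hI.insert_dep_iff.mp hdep).1
        have hbase : M.IsBase (C \ {e}) := by
          apply hI.isBase_of_spanning
          have h1 : M.closure (insert e (C \ {e})) = M.closure (C \ {e}) :=
            closure_insert_eq_of_mem_closure hcl
          rw [insert_diff_singleton, insert_eq_of_mem he] at h1
          rw [spanning_iff_closure_eq (diff_subset.trans hCE), ← h1]
          exact (spanning_iff_closure_eq hCE).mp hsp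
        have hb3 : (C \ {e}).ncard = 3 := by
          rw [ncard_diff_singleton_of_mem he, h4]
        have hle : M.rank ≤ 3 := by
          rw [rank, rkOn]
          have hmem : (0 : ℕ) ∈ {n | ∃ I, M.Indep I ∧ I ⊆ M.E ∧ I.ncard = n} :=
            ⟨∅, M.empty_indep, empty_subset _, ncard_empty α⟩
          refine csSup_le ⟨0, hmem⟩ ?_
          rintro n ⟨I, hI', _, rfl⟩
          obtain ⟨B, hB, hIB⟩ := hI'.exists_isBase_superset
          calc I.ncard ≤ B.ncard :=
                ncard_le_ncard hIB (M.set_finite B hB.subset_ground)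
            _ = 3 := by rw [hB.ncard_eq_ncard_of_isBase hbase, hb3]
        omega
      · by_cases hleg : ∃ i j : Fin r, i ≠ j ∧ C = L i ∪ L j
        · exact hleg
        · exfalso
          have h1 := (hns C hC hsp hleg).2
          choose f hf using fun i => ncard_eq_one.mp (h1 i)
          have hfC : ∀ i, f i ∈ C := fun i =>
            (show f i ∈ C ∩ L i from (hf i).symm ▸ rfl).1
          have hfL : ∀ i, f i ∈ L i := fun i =>
            (show f i ∈ C ∩ L i from (hf i).symm ▸ rfl).2
          have hinj : Function.Injective f := by
            intro i j hij
            by_contra hne'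
            exact Set.disjoint_left.mp (hdisj i j hne') (hfL i) (hij ▸ hfL j)
          have hrange : Set.range f ⊆ C := by
            rintro x ⟨i, rfl⟩; exact hfC i
          have h5 : r ≤ C.ncard := by
            have hcr : (Set.range f).ncard = r := by
              rw [← image_univ, ncard_image_of_injective _ hinj, ncard_univ,
                Nat.card_eq_fintype_card, Fintype.card_fin]
            rw [← hcr]
            exact ncard_le_ncard hrange hCfin
          omega
    obtain ⟨i, j, hij, rfl⟩ := key C₁ hC1 h41
    obtain ⟨k, l, hkl, rfl⟩ := key C₂ hC2 h42
    subst hXeq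
    have hnz : ((L i ∪ L j) ∩ (L k ∪ L l)).ncard ≠ 0 := by rw [hX2]; norm_num
    by_cases hik : i = k
    · subst hik
      by_cases hjl : j = l
      · exact absurd (hjl ▸ rfl) hne
      · exact ⟨i, aux_inter L hdisj hjl⟩
    · by_cases hil : i = l
      · subst hil
        rw [union_comm (L k) (L i)]
        by_cases hjk : j = k
        · exact absurd (by rw [hjk, union_comm]) hne
        · exact ⟨i, aux_inter L hdisj hjk⟩
      · by_cases hjk : j = k
        · subst hjk
          rw [union_comm (L i) (L j)]
          exact ⟨j, aux_inter L hdisj hil⟩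
        · by_cases hjl : j = l
          · subst hjl
            rw [union_comm (L i) (L j), union_comm (L k) (L j)]
            exact ⟨j, aux_inter L hdisj hik⟩
          · exfalso
            apply hnz
            have : (L i ∪ L j) ∩ (L k ∪ L l) = ∅ := by
              apply Set.disjoint_iff_inter_eq_empty.mp
              rw [Set.disjoint_union_left, Set.disjoint_union_right,
                Set.disjoint_union_right]
              exact ⟨⟨hdisj i k hik, hdisj i l hil⟩, hdisj j k hjk, hdisj j l hjl⟩
            rw [this, ncard_empty]


end Matroid
end
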